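/- arXiv:1712.01004 — 3 statements merged into one kernel-verified Lean document; each statement's English description precedes it below -/
import Mathlib

section
/- Let α > -1/2, 0 < s < 1, δ > 0, λ ∈ ℝ \ {0} and k ∈ ℕ. For -1 < r < 1 define the coefficient c^λ_{k,δ}(r) = (π Γ(α+1) / Γ((α+r+2)/2)²) · ∫_0^∞ e^{-δ(2y+|λ|)} · y^{(α+r+2)/2 + k - 1} · (y+|λ|)^{(r-α-2)/2 - k} dy. Then the following functional equation holds: (2|λ|)^s · [Γ((2k+α+2+s)/2)/Γ((2k+α+2-s)/2)] · c^λ_{k,δ}(-s) = (4δ)^s · (Γ((α+s+2)/2)/Γ((α-s+2)/2))² · c^λ_{k,δ}(s). -/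
open Real MeasureTheory

section Aux
open Set

lemma gammaIntegrable {a c : ℝ} (ha : 0 < a) (hc : 0 < c) :
    IntegrableOn (fun x : ℝ => x ^ (a - 1) * Real.exp (-(c * x))) (Set.Ioi 0) := by
  have h := integrableOn_rpow_mul_exp_neg_mul_rpow (p := 1) (s := a - 1) (b := c)
    (by linarith) one_pos hc
  refine h.congr_fun (fun x hx => ?_) measurableSet_Ioi
  beta_reduce
  rw [Real.rpow_one, neg_mul]

lemma swap_lemma (p q c L : ℝ) (hp : 0 < p) (hq : 0 < q) (hc : 0 < c) (hL : 0 < L) :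
    Real.Gamma q * ∫ y in Set.Ioi (0:ℝ), y ^ (p-1) * Real.exp (-(c*y)) * (y+L) ^ (-q)
    = Real.Gamma p * ∫ t in Set.Ioi (0:ℝ), t ^ (q-1) * Real.exp (-(L*t)) * (t+c) ^ (-p) := by
  set f : ℝ → ℝ → ℝ := fun y t =>
    (y ^ (p-1) * Real.exp (-(c*y))) * (t ^ (q-1) * Real.exp (-(L*t))) * Real.exp (-(y*t)) with hf
  have hgint := gammaIntegrable hp hc
  have hhint := gammaIntegrable hq hL
  have hmeas : AEStronglyMeasurable (Function.uncurry f)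
      ((volume.restrict (Ioi 0)).prod (volume.restrict (Ioi 0))) := by
    apply Measurable.aestronglyMeasurable
    unfold Function.uncurry
    fun_prop
  have hint : Integrable (Function.uncurry f)
      ((volume.restrict (Ioi 0)).prod (volume.restrict (Ioi 0))) := by
    refine Integrable.mono (hgint.mul_prod hhint) hmeas ?_
    rw [Measure.prod_restrict]
    filter_upwards [ae_restrict_mem (measurableSet_Ioi.prod measurableSet_Ioi)] with z hz
    obtain ⟨hy, ht⟩ := hz
    simp only [Function.uncurry, hf, mem_Ioi] at *
    have h1 : 0 < z.1 ^ (p-1) * Real.exp (-(c*z.1)) := by positivity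
    have h2 : 0 < z.2 ^ (q-1) * Real.exp (-(L*z.2)) := by positivity
    have h3 : Real.exp (-(z.1*z.2)) ≤ 1 := Real.exp_le_one_iff.mpr (by nlinarith)
    rw [Real.norm_eq_abs, Real.norm_eq_abs, abs_of_pos (by positivity), abs_of_pos (by positivity)]
    exact mul_le_of_le_one_right (by positivity) h3
  calc Real.Gamma q * ∫ y in Set.Ioi (0:ℝ), y ^ (p-1) * Real.exp (-(c*y)) * (y+L) ^ (-q)
      = ∫ y in Set.Ioi (0:ℝ), ∫ t in Set.Ioi (0:ℝ), f y t := by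
        rw [← integral_const_mul]
        refine (setIntegral_congr_fun measurableSet_Ioi fun y hy => ?_).symm
        have hy' : (0:ℝ) < y := hy
        have hLy : (0:ℝ) < L + y := by linarith
        have : (fun t => f y t)
            = fun t => (y ^ (p-1) * Real.exp (-(c*y))) * (t ^ (q-1) * Real.exp (-((L+y)*t))) := by
          funext t
          simp only [hf]
          rw [show -((L+y)*t) = -(L*t) + -(y*t) by ring, Real.exp_add]
          ring
        rw [this, integral_const_mul, integral_rpow_mul_exp_neg_mul_Ioi hq hLy]
        rw [show (1/(L+y)) ^ q = (y+L) ^ (-q) by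
          rw [one_div, ← Real.rpow_neg_one]
          rw [← Real.rpow_mul (by linarith), add_comm L y]
          norm_num]
        ring
    _ = ∫ t in Set.Ioi (0:ℝ), ∫ y in Set.Ioi (0:ℝ), f y t := integral_integral_swap hint
    _ = Real.Gamma p * ∫ t in Set.Ioi (0:ℝ), t ^ (q-1) * Real.exp (-(L*t)) * (t+c) ^ (-p) := by
        rw [← integral_const_mul]
        refine setIntegral_congr_fun measurableSet_Ioi fun t ht => ?_
        have ht' : (0:ℝ) < t := ht
        have hct : (0:ℝ) < c + t := by linarith
        have : (fun y => f y t)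
            = fun y => (t ^ (q-1) * Real.exp (-(L*t))) * (y ^ (p-1) * Real.exp (-((c+t)*y))) := by
          funext y
          simp only [hf]
          rw [show -((c+t)*y) = -(c*y) + -(y*t) by ring, Real.exp_add]
          ring
        rw [this, integral_const_mul, integral_rpow_mul_exp_neg_mul_Ioi hp hct]
        rw [show (1/(c+t)) ^ p = (t+c) ^ (-p) by
          rw [one_div, ← Real.rpow_neg_one]
          rw [← Real.rpow_mul (by linarith), add_comm c t]
          norm_num]
        ring

lemma scale_lemma (p q c L : ℝ) (hc : 0 < c) (hL : 0 < L) :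
    ∫ t in Set.Ioi (0:ℝ), t ^ (q-1) * Real.exp (-(L*t)) * (t+c) ^ (-p)
    = (c/L) ^ (q-p) * ∫ y in Set.Ioi (0:ℝ), y ^ (q-1) * Real.exp (-(c*y)) * (y+L) ^ (-p) := by
  have hρ : 0 < c / L := div_pos hc hL
  have h := integral_comp_mul_left_Ioi
    (fun t => t ^ (q-1) * Real.exp (-(L*t)) * (t+c) ^ (-p)) 0 hρ
  rw [mul_zero] at h
  have h2 : (∫ x in Set.Ioi (0:ℝ),
      ((c/L)*x) ^ (q-1) * Real.exp (-(L*((c/L)*x))) * ((c/L)*x+c) ^ (-p))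
      = ((c/L) ^ (q-1) * (c/L) ^ (-p)) *
        ∫ y in Set.Ioi (0:ℝ), y ^ (q-1) * Real.exp (-(c*y)) * (y+L) ^ (-p) := by
    rw [← integral_const_mul]
    refine setIntegral_congr_fun measurableSet_Ioi fun x hx => ?_
    have hx' : (0:ℝ) < x := hx
    rw [Real.mul_rpow hρ.le hx'.le,
      show L * ((c/L)*x) = c * x by field_simp,
      show (c/L)*x + c = (c/L) * (x + L) by field_simp,
      Real.mul_rpow hρ.le (by linarith)]
    ring
  rw [h2, smul_eq_mul] at h
  have h3 : (c/L) * ((c/L) ^ (q-1) * (c/L) ^ (-p) *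
      ∫ y in Set.Ioi (0:ℝ), y ^ (q-1) * Real.exp (-(c*y)) * (y+L) ^ (-p))
      = ∫ t in Set.Ioi (0:ℝ), t ^ (q-1) * Real.exp (-(L*t)) * (t+c) ^ (-p) := by
    rw [h, ← mul_assoc, mul_inv_cancel₀ hρ.ne', one_mul]
  have hpow : (c/L) * ((c/L) ^ (q-1) * (c/L) ^ (-p)) = (c/L) ^ (q-p) := by
    nth_rewrite 1 [← Real.rpow_one (c/L)]
    rw [← Real.rpow_add hρ, ← Real.rpow_add hρ,
      show (1:ℝ) + (q-1 + -p) = q - p by ring]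
  rw [← h3, ← hpow]
  ring

lemma key_lemma (p q c L : ℝ) (hp : 0 < p) (hq : 0 < q) (hc : 0 < c) (hL : 0 < L) :
    Real.Gamma q * ∫ y in Set.Ioi (0:ℝ), y ^ (p-1) * Real.exp (-(c*y)) * (y+L) ^ (-q)
    = Real.Gamma p * (c/L) ^ (q-p) *
        ∫ y in Set.Ioi (0:ℝ), y ^ (q-1) * Real.exp (-(c*y)) * (y+L) ^ (-p) := by
  rw [swap_lemma p q c L hp hq hc hL, scale_lemma p q c L hc hL, mul_assoc]



end Aux

/-- The Laguerre coefficient `c^λ_{k,δ}(r)` of the function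
`u_{r,δ}(x,w) = ((δ+x²/2)² + w²)^{-(r+α+2)/2}` (from the proof of Proposition 3.1):
`c^λ_{k,δ}(r) = (πΓ(α+1)/Γ((α+r+2)/2)²)
  ∫_0^∞ e^{-δ(2y+|λ|)} y^{(α+r+2)/2+k-1} (y+|λ|)^{(r-α-2)/2-k} dy`. -/
noncomputable def laguerreCoeff (α δ lam : ℝ) (k : ℕ) (r : ℝ) : ℝ :=
  (π * Real.Gamma (α + 1) / (Real.Gamma ((α + r + 2) / 2)) ^ 2) *
    ∫ y in Set.Ioi (0 : ℝ),
      Real.exp (-δ * (2 * y + |lam|)) * y ^ ((α + r + 2) / 2 + k - 1) *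
        (y + |lam|) ^ ((r - α - 2) / 2 - k)

/-- Proposition 3.1 (in terms of Laguerre coefficients): the functional equation
`(2|λ|)^s [Γ((2k+α+2+s)/2)/Γ((2k+α+2-s)/2)] c^λ_{k,δ}(-s)
  = (4δ)^s (Γ((α+s+2)/2)/Γ((α-s+2)/2))² c^λ_{k,δ}(s)`. -/
theorem laguerre_coeff_functional_equation (α s δ lam : ℝ) (k : ℕ)
    (hα : -1/2 < α) (hs0 : 0 < s) (hs1 : s < 1) (hδ : 0 < δ) (hlam : lam ≠ 0) :
    (2 * |lam|) ^ s *
        (Real.Gamma ((2 * k + α + 2 + s) / 2) / Real.Gamma ((2 * k + α + 2 - s) / 2)) *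
        laguerreCoeff α δ lam k (-s) =
      (4 * δ) ^ s *
        (Real.Gamma ((α + s + 2) / 2) / Real.Gamma ((α - s + 2) / 2)) ^ 2 *
        laguerreCoeff α δ lam k s := by
  have hL : (0:ℝ) < |lam| := abs_pos.mpr hlam
  have hk : (0:ℝ) ≤ (k:ℝ) := Nat.cast_nonneg k
  set L := |lam| with hLdef
  have hp : 0 < (α - s + 2)/2 + (k:ℝ) := by linarith
  have hq : 0 < (α + s + 2)/2 + (k:ℝ) := by linarith
  have hp0 : 0 < (α - s + 2)/2 := by linarith
  have hq0 : 0 < (α + s + 2)/2 := by linarith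
  have hc : (0:ℝ) < 2*δ := by linarith
  -- rewrite the two integrals
  have e₁ : (∫ y in Set.Ioi (0:ℝ), Real.exp (-δ * (2*y+L)) * y ^ ((α - s + 2)/2 + (k:ℝ) - 1) *
        (y+L) ^ ((-s - α - 2)/2 - (k:ℝ)))
      = Real.exp (-(δ*L)) * ∫ y in Set.Ioi (0:ℝ),
          y ^ (((α - s + 2)/2 + (k:ℝ)) - 1) * Real.exp (-(2*δ*y)) *
            (y+L) ^ (-((α + s + 2)/2 + (k:ℝ))) := by
    rw [← integral_const_mul]
    refine setIntegral_congr_fun measurableSet_Ioi fun y _ => ?_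
    rw [show (-s - α - 2)/2 - (k:ℝ) = -((α + s + 2)/2 + (k:ℝ)) by ring,
      show -δ * (2*y+L) = -(2*δ*y) + -(δ*L) by ring, Real.exp_add]
    ring
  have e₂ : (∫ y in Set.Ioi (0:ℝ), Real.exp (-δ * (2*y+L)) * y ^ ((α + s + 2)/2 + (k:ℝ) - 1) *
        (y+L) ^ ((s - α - 2)/2 - (k:ℝ)))
      = Real.exp (-(δ*L)) * ∫ y in Set.Ioi (0:ℝ),
          y ^ (((α + s + 2)/2 + (k:ℝ)) - 1) * Real.exp (-(2*δ*y)) *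
            (y+L) ^ (-((α - s + 2)/2 + (k:ℝ))) := by
    rw [← integral_const_mul]
    refine setIntegral_congr_fun measurableSet_Ioi fun y _ => ?_
    rw [show (α + s + 2)/2 + (k:ℝ) - 1 = ((α + s + 2)/2 + (k:ℝ)) - 1 by ring,
      show (s - α - 2)/2 - (k:ℝ) = -((α - s + 2)/2 + (k:ℝ)) by ring,
      show -δ * (2*y+L) = -(2*δ*y) + -(δ*L) by ring, Real.exp_add]
    ring
  have key := key_lemma ((α - s + 2)/2 + (k:ℝ)) ((α + s + 2)/2 + (k:ℝ)) (2*δ) L hp hq hc hL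
  rw [show ((α + s + 2)/2 + (k:ℝ)) - ((α - s + 2)/2 + (k:ℝ)) = s by ring] at key
  have h4 : (2*L) ^ s * (2*δ/L) ^ s = (4*δ) ^ s := by
    rw [← Real.mul_rpow (by positivity) (by positivity)]
    congr 1
    field_simp
    ring
  have hΓp := Real.Gamma_pos_of_pos hp
  have hΓq := Real.Gamma_pos_of_pos hq
  have hΓp0 := Real.Gamma_pos_of_pos hp0
  have hΓq0 := Real.Gamma_pos_of_pos hq0
  simp only [laguerreCoeff, ← hLdef]
  rw [show ((2*(k:ℝ) + α + 2 + s)/2 : ℝ) = (α + s + 2)/2 + (k:ℝ) by ring,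
    show ((2*(k:ℝ) + α + 2 - s)/2 : ℝ) = (α - s + 2)/2 + (k:ℝ) by ring,
    show ((α + -s + 2)/2 : ℝ) = (α - s + 2)/2 by ring]
  rw [e₁, e₂]
  set I₁ := ∫ y in Set.Ioi (0:ℝ), y ^ (((α - s + 2)/2 + (k:ℝ)) - 1) * Real.exp (-(2*δ*y)) *
      (y+L) ^ (-((α + s + 2)/2 + (k:ℝ))) with hI₁
  set I₂ := ∫ y in Set.Ioi (0:ℝ), y ^ (((α + s + 2)/2 + (k:ℝ)) - 1) * Real.exp (-(2*δ*y)) *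
      (y+L) ^ (-((α - s + 2)/2 + (k:ℝ))) with hI₂
  -- key : Γ q * I₁ = Γ p * (2δ/L)^s * I₂
  rw [← h4]
  set Gp := Real.Gamma ((α - s + 2)/2 + (k:ℝ)) with hGp
  set Gq := Real.Gamma ((α + s + 2)/2 + (k:ℝ)) with hGq
  set Gp0 := Real.Gamma ((α - s + 2)/2) with hGp0
  set Gq0 := Real.Gamma ((α + s + 2)/2) with hGq0
  have n1 : Gp ≠ 0 := ne_of_gt hΓp
  have n2 : Gq ≠ 0 := ne_of_gt hΓq
  have n3 : Gp0 ≠ 0 := ne_of_gt hΓp0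
  have n4 : Gq0 ≠ 0 := ne_of_gt hΓq0
  have hI : I₁ = Gp / Gq * ((2*δ/L) ^ s * I₂) := by
    field_simp
    linear_combination key
  rw [hI]
  field_simp
end

section
/- Let 0 < s < 1 and μ ≥ 0. Then s · ∫_0^∞ (cosh t - e^{-μt}) · (sinh t)^{-s-1} dt = 2^s · Γ(1-s) · Γ(μ/2 + (1+s)/2) / Γ(μ/2 + (1-s)/2), the integral being absolutely convergent. -/
open MeasureTheory Real

set_option maxHeartbeats 2000000
open MeasureTheory Real Set Filter Topology


-- Gamma lemmas
lemma gamma_step {s c : ℝ} (hs0 : 0 < s) (hs1 : s < 1) (hc : 0 < c) (hcs : c ≠ s)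
    (hcs1 : -1 < c - s) :
    Real.Gamma (c+1) / Real.Gamma (c+1-s) - Real.Gamma c / Real.Gamma (c-s)
      = s * Real.Gamma c / Real.Gamma (c+1-s) := by
  have hne : Real.Gamma (c-s) ≠ 0 := by
    apply Real.Gamma_ne_zero
    intro m
    rcases m with _ | m
    · simpa [sub_eq_zero] using hcs
    · push_cast
      intro h
      have : (m:ℝ) ≥ 0 := Nat.cast_nonneg m
      nlinarith
  have h1 : Real.Gamma (c+1) = c * Real.Gamma c := Real.Gamma_add_one hc.ne'
  have h2 : Real.Gamma (c+1-s) = (c-s) * Real.Gamma (c-s) := by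
    rw [show c+1-s = (c-s)+1 by ring, Real.Gamma_add_one (by
      intro h; exact hcs (by linarith [sub_eq_zero.mp h]))]
  have hne2 : Real.Gamma (c+1-s) ≠ 0 := by
    rw [h2]
    exact mul_ne_zero (sub_ne_zero.mpr hcs) hne
  rw [h1]
  rw [h2] at hne2 ⊢
  have hcs0 : c - s ≠ 0 := sub_ne_zero.mpr hcs
  field_simp
  ring

lemma gautschi_up {x s : ℝ} (hx : 0 < x) (hs0 : 0 < s) (hs1 : s < 1) :
    Real.Gamma (x+s) ≤ Real.Gamma x * x ^ s := by
  have h := Real.Gamma_mul_add_mul_le_rpow_Gamma_mul_rpow_Gamma (s := x) (t := x+1)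
    (a := 1-s) (b := s) hx (by linarith) (by linarith) hs0 (by ring)
  have e : (1-s) * x + s * (x+1) = x + s := by ring
  rw [e] at h
  have h2 : Real.Gamma x ^ (1-s) * Real.Gamma (x+1) ^ s = Real.Gamma x * x ^ s := by
    rw [Real.Gamma_add_one hx.ne', Real.mul_rpow hx.le (Real.Gamma_pos_of_pos hx).le,
      ← mul_assoc, mul_comm (Real.Gamma x ^ (1-s)) _, mul_assoc, mul_comm (x ^ s) _]
    rw [← Real.rpow_add (Real.Gamma_pos_of_pos hx), show 1-s+s = (1:ℝ) by ring,
      Real.rpow_one, mul_comm]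
  linarith [h, h2.le, h2.ge]

lemma gautschi_low {x s : ℝ} (hx : 0 < x) (hs0 : 0 < s) (hs1 : s < 1) :
    Real.Gamma x * x ≤ Real.Gamma (x+s) * (x+s) ^ (1-s) := by
  have h := Real.Gamma_mul_add_mul_le_rpow_Gamma_mul_rpow_Gamma (s := x+s) (t := x+s+1)
    (a := s) (b := 1-s) (by linarith) (by linarith) hs0 (by linarith) (by ring)
  have e : s * (x+s) + (1-s) * (x+s+1) = x + 1 := by ring
  rw [e] at h
  have hgs : 0 < Real.Gamma (x+s) := Real.Gamma_pos_of_pos (by linarith)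
  have h2 : Real.Gamma (x+s) ^ s * Real.Gamma (x+s+1) ^ (1-s)
      = Real.Gamma (x+s) * (x+s) ^ (1-s) := by
    rw [Real.Gamma_add_one (by positivity : x+s ≠ 0),
      Real.mul_rpow (by positivity) hgs.le]
    rw [show Real.Gamma (x+s) ^ s * ((x+s) ^ (1-s) * Real.Gamma (x+s) ^ (1-s))
        = (Real.Gamma (x+s) ^ s * Real.Gamma (x+s) ^ (1-s)) * (x+s) ^ (1-s) by ring,
      ← Real.rpow_add hgs, show s+(1-s) = (1:ℝ) by ring, Real.rpow_one]
  rw [← h2]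
  rw [Real.Gamma_add_one hx.ne'] at h
  linarith

lemma shift_rpow_tendsto_zero (c : ℝ) {e : ℝ} (he : e < 0) :
    Tendsto (fun N : ℕ => ((N:ℝ)+c) ^ e) atTop (𝓝 0) := by
  have h1 : Tendsto (fun N : ℕ => ((N:ℝ)+c)) atTop atTop :=
    tendsto_atTop_add_const_right atTop c tendsto_natCast_atTop_atTop
  have h2 : Tendsto (fun x : ℝ => x ^ (-(-e))) atTop (𝓝 0) :=
    tendsto_rpow_neg_atTop (by linarith)
  simpa [Function.comp_def] using h2.comp h1

lemma rpow_sub_rpow_le {s : ℝ} (hs1 : s ≤ 1) {x y : ℝ} (hx : 0 < x) (hxy : x ≤ y) :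
    y ^ s - x ^ s ≤ (y-x) * x ^ (s-1) := by
  have hy : 0 < y := lt_of_lt_of_le hx hxy
  have hdiv : 1 ≤ y / x := (one_le_div hx).mpr hxy
  have h1 : (y/x) ^ s ≤ y/x := by
    calc (y/x) ^ s ≤ (y/x) ^ (1:ℝ) := Real.rpow_le_rpow_of_exponent_le hdiv hs1
    _ = y/x := Real.rpow_one _
  have h2 : y ^ s ≤ x ^ s * (y/x) := by
    have hxy' : y = x * (y/x) := by field_simp
    calc y ^ s = (x * (y/x)) ^ s := by rw [← hxy']
    _ = x ^ s * (y/x) ^ s := Real.mul_rpow hx.le (by positivity)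
    _ ≤ x ^ s * (y/x) := by
        exact mul_le_mul_of_nonneg_left h1 (Real.rpow_nonneg hx.le s)
  have h3 : x ^ s * (y/x) - x ^ s = (y - x) * x ^ (s-1) := by
    rw [Real.rpow_sub_one hx.ne']
    field_simp
  linarith

lemma rpow_diff_tendsto {s : ℝ} (hs0 : 0 < s) (hs1 : s < 1) (c d : ℝ) :
    Tendsto (fun N : ℕ => ((N:ℝ)+c) ^ s - ((N:ℝ)+d) ^ s) atTop (𝓝 0) := by
  have key : ∀ c d : ℝ, c ≤ d →
      Tendsto (fun N : ℕ => ((N:ℝ)+c) ^ s - ((N:ℝ)+d) ^ s) atTop (𝓝 0) := by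
    intro c d hcd
    have hev : ∀ᶠ N : ℕ in atTop, 0 < (N:ℝ) + c := by
      have := (tendsto_atTop_add_const_right atTop c
        tendsto_natCast_atTop_atTop).eventually_gt_atTop 0
      exact this
    have hlow : Tendsto (fun N : ℕ => -((d-c) * ((N:ℝ)+c) ^ (s-1))) atTop (𝓝 0) := by
      have := (shift_rpow_tendsto_zero c (by linarith : s-1 < 0)).const_mul (d-c)
      simpa using this.neg
    refine tendsto_of_tendsto_of_tendsto_of_le_of_le' hlow tendsto_const_nhds ?_ ?_
    · filter_upwards [hev] with N hN
      have h := rpow_sub_rpow_le hs1.le hN (by linarith : (N:ℝ)+c ≤ (N:ℝ)+d)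
      have e : (N:ℝ)+d - ((N:ℝ)+c) = d - c := by ring
      rw [e] at h
      linarith
    · filter_upwards [hev] with N hN
      have h := Real.rpow_le_rpow hN.le (by linarith : (N:ℝ)+c ≤ (N:ℝ)+d) hs0.le
      linarith
  rcases le_total c d with h | h
  · exact key c d h
  · have := (key d c h).neg
    simpa [neg_sub] using this

lemma Hdiff_tendsto {s : ℝ} (hs0 : 0 < s) (hs1 : s < 1) (c d : ℝ) :
    Tendsto (fun N : ℕ => Real.Gamma (c+N) / Real.Gamma (c+N-s)
      - Real.Gamma (d+N) / Real.Gamma (d+N-s)) atTop (𝓝 0) := by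
  -- upper and lower bounds for H y := Γ y / Γ (y - s), valid for y > s + something
  have hHup : ∀ y : ℝ, s < y → Real.Gamma y / Real.Gamma (y-s) ≤ (y-s) ^ s := by
    intro y hy
    have hx : 0 < y - s := by linarith
    have h := gautschi_up hx hs0 hs1
    rw [show y - s + s = y by ring] at h
    rw [div_le_iff₀ (Real.Gamma_pos_of_pos hx)]
    linarith [h, mul_comm (Real.Gamma (y-s)) ((y-s)^s)]
  have hHlow : ∀ y : ℝ, s < y → (y-s) * y ^ (s-1) ≤ Real.Gamma y / Real.Gamma (y-s) := by
    intro y hy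
    have hx : 0 < y - s := by linarith
    have hy0 : 0 < y := by linarith
    have h := gautschi_low hx hs0 hs1
    rw [show y - s + s = y by ring] at h
    rw [le_div_iff₀ (Real.Gamma_pos_of_pos hx)]
    -- h : Γ(y-s) * (y-s) ≤ Γ y * y^(1-s)
    have hy1s : 0 < y ^ (1-s) := Real.rpow_pos_of_pos hy0 _
    have e : y ^ (s-1) * y ^ (1-s) = 1 := by
      rw [← Real.rpow_add hy0]
      norm_num
    calc (y-s) * y ^ (s-1) * Real.Gamma (y-s)
        = (Real.Gamma (y-s) * (y-s)) * y ^ (s-1) := by ring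
      _ ≤ (Real.Gamma y * y ^ (1-s)) * y ^ (s-1) := by
          exact mul_le_mul_of_nonneg_right h (Real.rpow_nonneg hy0.le _)
      _ = Real.Gamma y * (y ^ (s-1) * y ^ (1-s)) := by ring
      _ = Real.Gamma y := by rw [e, mul_one]
  -- identity: (y - s) * y^(s-1) = y^s - s * y^(s-1)
  have hid : ∀ y : ℝ, 0 < y → (y-s) * y ^ (s-1) = y ^ s - s * y ^ (s-1) := by
    intro y hy
    have : y * y ^ (s-1) = y ^ s := by
      rw [Real.rpow_sub_one hy.ne']
      field_simp
    nlinarith [this]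
  have hev : ∀ᶠ N : ℕ in atTop, s < c + N ∧ s < d + N := by
    have h1 := (tendsto_atTop_add_const_left atTop c
      tendsto_natCast_atTop_atTop).eventually_gt_atTop s
    have h2 := (tendsto_atTop_add_const_left atTop d
      tendsto_natCast_atTop_atTop).eventually_gt_atTop s
    filter_upwards [h1, h2] with N hN1 hN2
    exact ⟨hN1, hN2⟩
  -- upper bound sequence
  have hU : Tendsto (fun N : ℕ => (((N:ℝ)+(c-s)) ^ s - ((N:ℝ)+d) ^ s)
      + s * ((N:ℝ)+d) ^ (s-1)) atTop (𝓝 0) := by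
    have h1 := rpow_diff_tendsto hs0 hs1 (c-s) d
    have h2 := (shift_rpow_tendsto_zero d (by linarith : s-1 < 0)).const_mul s
    simpa using h1.add h2
  have hL : Tendsto (fun N : ℕ => (((N:ℝ)+c) ^ s - ((N:ℝ)+(d-s)) ^ s)
      - s * ((N:ℝ)+c) ^ (s-1)) atTop (𝓝 0) := by
    have h1 := rpow_diff_tendsto hs0 hs1 c (d-s)
    have h2 := (shift_rpow_tendsto_zero c (by linarith : s-1 < 0)).const_mul s
    simpa using h1.sub h2
  refine tendsto_of_tendsto_of_tendsto_of_le_of_le' hL hU ?_ ?_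
  · filter_upwards [hev] with N hN
    obtain ⟨h1, h2⟩ := hN
    have hcn : 0 < c + N - s := by linarith
    have hdn : 0 < d + (N:ℝ) := by linarith
    have hlo := hHlow (c+N) h1
    have hup := hHup (d+N) h2
    have e1 : (c+(N:ℝ)-s) * (c+N) ^ (s-1) = (c+(N:ℝ)) ^ s - s * (c+(N:ℝ)) ^ (s-1) :=
      hid _ (by linarith)
    have e2 : ((N:ℝ)+c) = c + (N:ℝ) := by ring
    have e3 : ((N:ℝ)+(d-s)) = d + (N:ℝ) - s := by ring
    rw [e2, e3]
    have := sub_le_sub hlo hup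
    calc (c+(N:ℝ)) ^ s - (d+(N:ℝ)-s) ^ s - s * (c+(N:ℝ)) ^ (s-1)
        = ((c+(N:ℝ)) ^ s - s * (c+(N:ℝ)) ^ (s-1)) - (d+(N:ℝ)-s) ^ s := by ring
      _ = (c+(N:ℝ)-s) * (c+N) ^ (s-1) - (d+(N:ℝ)-s) ^ s := by rw [e1]
      _ ≤ _ := this
  · filter_upwards [hev] with N hN
    obtain ⟨h1, h2⟩ := hN
    have hup := hHup (c+N) h1
    have hlo := hHlow (d+N) h2
    have e1 : (d+(N:ℝ)-s) * (d+N) ^ (s-1) = (d+(N:ℝ)) ^ s - s * (d+(N:ℝ)) ^ (s-1) :=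
      hid _ (by linarith)
    have e2 : ((N:ℝ)+(c-s)) = c + (N:ℝ) - s := by ring
    have e3 : ((N:ℝ)+d) = d + (N:ℝ) := by ring
    rw [e2, e3]
    have := sub_le_sub hup hlo
    calc Real.Gamma (c+N) / Real.Gamma (c+N-s) - Real.Gamma (d+N) / Real.Gamma (d+N-s)
        ≤ (c+(N:ℝ)-s) ^ s - (d+(N:ℝ)-s) * (d+N) ^ (s-1) := this
      _ = (c+(N:ℝ)-s) ^ s - (d+(N:ℝ)) ^ s + s * (d+(N:ℝ)) ^ (s-1) := by rw [e1]; ring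

-- Beta integral on Ioo
lemma betaIoo {c b : ℝ} (hc : 0 < c) (hb : 0 < b) :
    IntegrableOn (fun v : ℝ => v ^ (c-1) * (1-v) ^ (b-1)) (Set.Ioo 0 1) ∧
    ∫ v in Set.Ioo (0:ℝ) 1, v ^ (c-1) * (1-v) ^ (b-1)
      = Real.Gamma c * Real.Gamma b / Real.Gamma (c+b) := by
  have hcc : (0:ℝ) < (c:ℂ).re := by simpa using hc
  have hbb : (0:ℝ) < (b:ℂ).re := by simpa using hb
  have key : Complex.Gamma c * Complex.Gamma b
      = Complex.Gamma (c+b) * Complex.betaIntegral c b := by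
    have := Complex.Gamma_mul_Gamma_eq_betaIntegral hcc hbb
    simpa using this
  -- pointwise equality of complexified integrand on [0,1]
  have hpt : ∀ x : ℝ, x ∈ Set.uIcc (0:ℝ) 1 →
      ((x : ℂ) ^ ((c:ℂ)-1) * ((1:ℂ)-x) ^ ((b:ℂ)-1))
        = ((x ^ (c-1) * (1-x) ^ (b-1) : ℝ) : ℂ) := by
    intro x hx
    rw [Set.uIcc_of_le (by norm_num : (0:ℝ) ≤ 1)] at hx
    obtain ⟨h0, h1⟩ := hx
    have e1 : ((x:ℂ)) ^ ((c:ℂ)-1) = ((x ^ (c-1) : ℝ) : ℂ) := by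
      rw [Complex.ofReal_cpow h0]; push_cast; ring_nf
    have e2 : ((1:ℂ)-x) ^ ((b:ℂ)-1) = (((1-x) ^ (b-1) : ℝ) : ℂ) := by
      rw [Complex.ofReal_cpow (by linarith)]; push_cast; ring_nf
    rw [e1, e2]; push_cast; ring
  have hbeta : Complex.betaIntegral c b
      = ((∫ x in (0:ℝ)..1, x ^ (c-1) * (1-x) ^ (b-1) : ℝ) : ℂ) := by
    rw [Complex.betaIntegral]
    rw [intervalIntegral.integral_congr hpt]
    exact intervalIntegral.integral_ofReal
  have hconv := Complex.betaIntegral_convergent hcc hbb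
  -- real integrability
  have hint : IntegrableOn (fun v : ℝ => v ^ (c-1) * (1-v) ^ (b-1)) (Set.Ioo 0 1) := by
    have h1 : IntegrableOn (fun x : ℝ => (x:ℂ) ^ ((c:ℂ)-1) * ((1:ℂ)-x) ^ ((b:ℂ)-1))
        (Set.Ioc 0 1) := by
      rw [← intervalIntegrable_iff_integrableOn_Ioc_of_le (by norm_num : (0:ℝ) ≤ 1)]
      exact hconv
    have h2 := h1.mono_set Set.Ioo_subset_Ioc_self
    have h3 : IntegrableOn
        (fun x : ℝ => ((x:ℂ) ^ ((c:ℂ)-1) * ((1:ℂ)-x) ^ ((b:ℂ)-1)).re) (Set.Ioo 0 1) :=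
      h2.re
    refine h3.congr_fun (fun x hx => ?_) measurableSet_Ioo
    have hxm : x ∈ Set.uIcc (0:ℝ) 1 := by
      rw [Set.uIcc_of_le (by norm_num : (0:ℝ) ≤ 1)]
      exact ⟨hx.1.le, hx.2.le⟩
    beta_reduce
    rw [hpt x hxm, Complex.ofReal_re]
  refine ⟨hint, ?_⟩
  have hgne : Real.Gamma (c+b) ≠ 0 := (Real.Gamma_pos_of_pos (by linarith)).ne'
  have : ((Real.Gamma c * Real.Gamma b : ℝ) : ℂ)
      = ((Real.Gamma (c+b) * ∫ x in (0:ℝ)..1, x ^ (c-1) * (1-x) ^ (b-1) : ℝ) : ℂ) := by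
    push_cast
    rw [← Complex.Gamma_ofReal, ← Complex.Gamma_ofReal, ← Complex.Gamma_ofReal]
    rw [key, hbeta]
    push_cast
    ring
  have hr : Real.Gamma c * Real.Gamma b
      = Real.Gamma (c+b) * ∫ x in (0:ℝ)..1, x ^ (c-1) * (1-x) ^ (b-1) :=
    Complex.ofReal_inj.mp this
  have hio : ∫ x in (0:ℝ)..1, x ^ (c-1) * (1-x) ^ (b-1)
      = ∫ v in Set.Ioo (0:ℝ) 1, v ^ (c-1) * (1-v) ^ (b-1) := by
    rw [intervalIntegral.integral_of_le (by norm_num : (0:ℝ) ≤ 1),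
      ← MeasureTheory.integral_Ioc_eq_integral_Ioo]
  rw [hio] at hr
  field_simp
  linarith [hr]

-- Bernoulli-type bound
lemma one_sub_rpow_le {a v : ℝ} (ha : 0 ≤ a) (hv0 : 0 < v) (hv1 : v ≤ 1) :
    1 - v ^ a ≤ (1 + a) * (1 - v) := by
  rcases le_total a 1 with h | h
  · have h1 : v ^ (1:ℝ) ≤ v ^ a := Real.rpow_le_rpow_of_exponent_ge hv0 hv1 h
    rw [Real.rpow_one] at h1
    nlinarith
  · have h2 : 1 + a * (v - 1) ≤ (1 + (v-1)) ^ a :=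
      one_add_mul_self_le_rpow_one_add (by linarith) h
    have e : (1:ℝ) + (v - 1) = v := by ring
    rw [e] at h2
    nlinarith

lemma core_lemma {s q : ℝ} (hs0 : 0 < s) (hs1 : s < 1) (hq : s/2 + 1/2 ≤ q) :
    IntegrableOn
      (fun v : ℝ => ((v ^ (s/2-1) + v ^ (s/2))/2 - v ^ (q-1)) * (1-v) ^ (-s-1))
      (Set.Ioo 0 1) ∧
    s * ∫ v in Set.Ioo (0:ℝ) 1,
        ((v ^ (s/2-1) + v ^ (s/2))/2 - v ^ (q-1)) * (1-v) ^ (-s-1)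
      = Real.Gamma (1-s) * Real.Gamma q / Real.Gamma (q-s) := by
  have hp0 : 0 < s/2 := by linarith
  have hp1 : s/2 < 1/2 := by linarith
  have hq0 : 0 < q := by linarith
  have hqs : s < q := by linarith
  have h1s : 0 < 1 - s := by linarith
  set p := s/2 with hp_def
  set H : ℝ → ℝ := fun x => Real.Gamma x / Real.Gamma (x - s) with hH
  set g : ℝ → ℝ := fun v => ((v ^ (p-1) + v ^ p)/2 - v ^ (q-1)) * (1-v) ^ (-s-1) with hg
  set f : ℕ → ℝ → ℝ := fun N v => g v * (1 - v ^ N) with hf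
  -- pointwise nonnegativity of the bracket
  have hnn : ∀ v ∈ Set.Ioo (0:ℝ) 1, 0 ≤ (v ^ (p-1) + v ^ p)/2 - v ^ (q-1) := by
    rintro v ⟨hv0, hv1⟩
    have h1 : v ^ (q-1) ≤ v ^ (p-1/2) :=
      Real.rpow_le_rpow_of_exponent_ge hv0 hv1.le (by linarith)
    have ha : v ^ ((p-1)/2) * v ^ ((p-1)/2) = v ^ (p-1) := by
      rw [← Real.rpow_add hv0]; ring_nf
    have hb : v ^ (p/2) * v ^ (p/2) = v ^ p := by
      rw [← Real.rpow_add hv0]; ring_nf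
    have hab : v ^ ((p-1)/2) * v ^ (p/2) = v ^ (p-1/2) := by
      rw [← Real.rpow_add hv0]; ring_nf
    nlinarith [sq_nonneg (v ^ ((p-1)/2) - v ^ (p/2)), sq_nonneg (v ^ ((p-1)/2) + v ^ (p/2))]
  -- upper bound for the bracket
  have hub : ∀ v ∈ Set.Ioo (0:ℝ) 1,
      (v ^ (p-1) + v ^ p)/2 - v ^ (q-1) ≤ (1+q) * (v ^ (p-1) * (1-v)) := by
    rintro v ⟨hv0, hv1⟩
    have hvp : 0 < v ^ (p-1) := Real.rpow_pos_of_pos hv0 _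
    have hT1 : v ^ (p-1) - v ^ (q-1) ≤ (1+q) * (v ^ (p-1) * (1-v)) := by
      have e : v ^ (q-1) = v ^ (p-1) * v ^ (q-p) := by
        rw [← Real.rpow_add hv0]; ring_nf
      have hber := one_sub_rpow_le (by linarith : (0:ℝ) ≤ q - p) hv0 hv1.le
      have h2 : 1 + (q - p) ≤ 1 + q := by linarith
      have h3 : 1 - v ^ (q-p) ≤ (1+q) * (1-v) := by
        refine hber.trans ?_
        have : 0 ≤ 1 - v := by linarith
        nlinarith
      calc v ^ (p-1) - v ^ (q-1) = v ^ (p-1) * (1 - v ^ (q-p)) := by rw [e]; ring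
        _ ≤ v ^ (p-1) * ((1+q) * (1-v)) := by
            exact mul_le_mul_of_nonneg_left h3 hvp.le
        _ = (1+q) * (v ^ (p-1) * (1-v)) := by ring
    have hT2 : v ^ p - v ^ (q-1) ≤ (1+q) * (v ^ (p-1) * (1-v)) := by
      rcases le_total (q-1) p with h | h
      · -- q-1 ≤ p : v^p ≤ v^(q-1)
        have : v ^ p ≤ v ^ (q-1) := Real.rpow_le_rpow_of_exponent_ge hv0 hv1.le h
        nlinarith [mul_nonneg (mul_nonneg (by linarith : (0:ℝ) ≤ 1+q) hvp.le)
          (by linarith : (0:ℝ) ≤ 1-v)]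
      · have e : v ^ (q-1) = v ^ p * v ^ (q-1-p) := by
          rw [← Real.rpow_add hv0]; ring_nf
        have hber := one_sub_rpow_le (by linarith : (0:ℝ) ≤ q - 1 - p) hv0 hv1.le
        have hvp2 : 0 < v ^ p := Real.rpow_pos_of_pos hv0 _
        have hple : v ^ p ≤ v ^ (p-1) :=
          Real.rpow_le_rpow_of_exponent_ge hv0 hv1.le (by linarith)
        have h3 : 1 - v ^ (q-1-p) ≤ (1+q) * (1-v) := by
          refine hber.trans ?_
          have : 0 ≤ 1 - v := by linarith
          nlinarith
        calc v ^ p - v ^ (q-1) = v ^ p * (1 - v ^ (q-1-p)) := by rw [e]; ring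
          _ ≤ v ^ p * ((1+q) * (1-v)) := mul_le_mul_of_nonneg_left h3 hvp2.le
          _ ≤ v ^ (p-1) * ((1+q) * (1-v)) := by
              exact mul_le_mul_of_nonneg_right hple (by nlinarith)
          _ = (1+q) * (v ^ (p-1) * (1-v)) := by ring
    nlinarith
  -- (1-v) splitting
  have hsplit : ∀ v ∈ Set.Ioo (0:ℝ) 1, (1-v) ^ (-s-1) * (1-v) = (1-v) ^ (-s) := by
    rintro v ⟨hv0, hv1⟩
    have h1v : (0:ℝ) < 1 - v := by linarith
    calc (1-v) ^ (-s-1) * (1-v) = (1-v) ^ (-s-1) * (1-v) ^ (1:ℝ) := by rw [Real.rpow_one]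
      _ = (1-v) ^ (-s-1+1) := (Real.rpow_add h1v _ _).symm
      _ = (1-v) ^ (-s) := by norm_num
  -- continuity of g on Ioo 0 1
  have hgc : ContinuousOn g (Set.Ioo 0 1) := by
    have hid : ContinuousOn (fun v : ℝ => v) (Set.Ioo 0 1) := continuousOn_id
    have hone : ContinuousOn (fun v : ℝ => 1-v) (Set.Ioo 0 1) :=
      (continuous_const.sub continuous_id).continuousOn
    have c1 : ContinuousOn (fun v : ℝ => v ^ (p-1)) (Set.Ioo 0 1) :=
      ContinuousOn.rpow_const hid (fun x hx => Or.inl hx.1.ne')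
    have c2 : ContinuousOn (fun v : ℝ => v ^ p) (Set.Ioo 0 1) :=
      ContinuousOn.rpow_const hid (fun x hx => Or.inl hx.1.ne')
    have c3 : ContinuousOn (fun v : ℝ => v ^ (q-1)) (Set.Ioo 0 1) :=
      ContinuousOn.rpow_const hid (fun x hx => Or.inl hx.1.ne')
    have c4 : ContinuousOn (fun v : ℝ => (1-v) ^ (-s-1)) (Set.Ioo 0 1) :=
      ContinuousOn.rpow_const hone (fun x hx => Or.inl (by
        have := hx.2; intro h; simp only [sub_eq_zero] at h; linarith))
    exact (((c1.add c2).div_const 2).sub c3).mul c4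
  have hgm : AEStronglyMeasurable g (volume.restrict (Set.Ioo 0 1)) :=
    hgc.aestronglyMeasurable measurableSet_Ioo
  -- dominator
  have hDint : IntegrableOn (fun v : ℝ => (1+q) * (v ^ (p-1) * (1-v) ^ (-s)))
      (Set.Ioo 0 1) := by
    have hb := (betaIoo hp0 h1s).1
    have hb' : IntegrableOn (fun v : ℝ => v ^ (p-1) * (1-v) ^ (-s)) (Set.Ioo 0 1) := by
      simpa [show (1:ℝ)-s-1 = -s by ring] using hb
    exact hb'.const_mul _
  have hgnn : ∀ v ∈ Set.Ioo (0:ℝ) 1, 0 ≤ g v := by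
    rintro v hv
    exact mul_nonneg (hnn v hv) (Real.rpow_nonneg (by linarith [hv.2]) _)
  have hgle : ∀ v ∈ Set.Ioo (0:ℝ) 1, g v ≤ (1+q) * (v ^ (p-1) * (1-v) ^ (-s)) := by
    rintro v hv
    obtain ⟨hv0, hv1⟩ := hv
    have h1v : (0:ℝ) < 1-v := by linarith
    have h := mul_le_mul_of_nonneg_right (hub v ⟨hv0, hv1⟩)
      (Real.rpow_nonneg h1v.le (-s-1))
    calc g v ≤ (1+q) * (v ^ (p-1) * (1-v)) * (1-v) ^ (-s-1) := h
      _ = (1+q) * (v ^ (p-1) * ((1-v) ^ (-s-1) * (1-v))) := by ring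
      _ = (1+q) * (v ^ (p-1) * (1-v) ^ (-s)) := by rw [hsplit v ⟨hv0, hv1⟩]
  have hgint : IntegrableOn g (Set.Ioo 0 1) := by
    refine Integrable.mono hDint hgm ?_
    refine (ae_restrict_iff' measurableSet_Ioo).mpr (ae_of_all _ fun v hv => ?_)
    rw [Real.norm_eq_abs, Real.norm_eq_abs, abs_of_nonneg (hgnn v hv),
      abs_of_nonneg (mul_nonneg (by linarith : (0:ℝ) ≤ 1+q)
        (mul_nonneg (Real.rpow_nonneg hv.1.le _)
          (Real.rpow_nonneg (by linarith [hv.2] : (0:ℝ) ≤ 1-v) _)))]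
    exact hgle v hv
  -- f N : bounds and integrability
  have hfbd : ∀ N : ℕ, ∀ v ∈ Set.Ioo (0:ℝ) 1, 0 ≤ f N v ∧ f N v ≤ g v := by
    intro N v hv
    obtain ⟨hv0, hv1⟩ := hv
    have h1 : 0 ≤ 1 - v ^ N := by
      have := pow_le_one₀ hv0.le hv1.le (n := N)
      linarith
    have h2 : 1 - v ^ N ≤ 1 := by
      have := pow_nonneg hv0.le N
      linarith
    constructor
    · exact mul_nonneg (hgnn v ⟨hv0, hv1⟩) h1
    · calc f N v = g v * (1 - v ^ N) := rfl
        _ ≤ g v * 1 := mul_le_mul_of_nonneg_left h2 (hgnn v ⟨hv0, hv1⟩)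
        _ = g v := mul_one _
  have hfint : ∀ N : ℕ, IntegrableOn (f N) (Set.Ioo 0 1) := by
    intro N
    have hm : AEStronglyMeasurable (f N) (volume.restrict (Set.Ioo 0 1)) := by
      refine ContinuousOn.aestronglyMeasurable ?_ measurableSet_Ioo
      exact hgc.mul (continuous_const.sub (continuous_pow N)).continuousOn
    refine Integrable.mono hgint hm ?_
    refine (ae_restrict_iff' measurableSet_Ioo).mpr (ae_of_all _ fun v hv => ?_)
    rw [Real.norm_eq_abs, Real.norm_eq_abs, abs_of_nonneg (hfbd N v hv).1,
      abs_of_nonneg (hgnn v hv)]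
    exact (hfbd N v hv).2
  -- closed form for the truncated integrals
  have key : ∀ N : ℕ, ∫ v in Set.Ioo (0:ℝ) 1, f N v
      = Real.Gamma (1-s)/s * ((H (p+(N:ℝ)) + H (p+1+(N:ℝ)))/2 - H (q+(N:ℝ))
          - ((H p + H (p+1))/2 - H q)) := by
    intro N
    induction N with
    | zero =>
      simp only [hf, pow_zero, sub_self, mul_zero, integral_zero, Nat.cast_zero, add_zero]
    | succ N ih =>
      have hN0 : (0:ℝ) ≤ (N:ℝ) := Nat.cast_nonneg N
      have hc1pos : 0 < p + (N:ℝ) := by linarith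
      have hc2pos : 0 < p + 1 + (N:ℝ) := by linarith
      have hc3pos : 0 < q + (N:ℝ) := by linarith
      have hc1ne : p + (N:ℝ) ≠ s := by
        rcases Nat.eq_zero_or_pos N with h0 | h1
        · subst h0; push_cast; intro h; rw [hp_def] at h; linarith
        · have : (1:ℝ) ≤ (N:ℝ) := by exact_mod_cast h1
          intro h; linarith
      have hc2ne : p + 1 + (N:ℝ) ≠ s := by intro h; linarith
      have hc3ne : q + (N:ℝ) ≠ s := by intro h; linarith
      have hc1gt : -1 < p + (N:ℝ) - s := by linarith
      have hc2gt : -1 < p + 1 + (N:ℝ) - s := by linarith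
      have hc3gt : -1 < q + (N:ℝ) - s := by linarith
      have hB1 := betaIoo hc1pos h1s
      have hB2 := betaIoo hc2pos h1s
      have hB3 := betaIoo hc3pos h1s
      -- pointwise splitting
      have hpt : ∀ v ∈ Set.Ioo (0:ℝ) 1, f (N+1) v = f N v
          + ((v ^ (p+(N:ℝ)-1) * (1-v) ^ (1-s-1)
              + v ^ (p+1+(N:ℝ)-1) * (1-v) ^ (1-s-1))/2
             - v ^ (q+(N:ℝ)-1) * (1-v) ^ (1-s-1)) := by
        rintro v ⟨hv0, hv1⟩
        have h1v : (0:ℝ) < 1-v := by linarith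
        have hvN : v ^ ((N:ℝ)) = v ^ N := Real.rpow_natCast v N
        have e1 : v ^ (p+(N:ℝ)-1) = v ^ (p-1) * v ^ N := by
          rw [← hvN, ← Real.rpow_add hv0]; congr 1; ring
        have e2 : v ^ (p+1+(N:ℝ)-1) = v ^ p * v ^ N := by
          rw [← hvN, ← Real.rpow_add hv0]; congr 1; ring
        have e3 : v ^ (q+(N:ℝ)-1) = v ^ (q-1) * v ^ N := by
          rw [← hvN, ← Real.rpow_add hv0]; congr 1; ring
        have es : (1-v) ^ ((1:ℝ)-s-1) = (1-v) ^ (-s) := by congr 1; ring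
        simp only [hf, hg]
        rw [e1, e2, e3, es, ← hsplit v ⟨hv0, hv1⟩, pow_succ]
        ring
      have hco : IntegrableOn (fun v : ℝ =>
          (v ^ (p+(N:ℝ)-1) * (1-v) ^ (1-s-1)
              + v ^ (p+1+(N:ℝ)-1) * (1-v) ^ (1-s-1))/2
             - v ^ (q+(N:ℝ)-1) * (1-v) ^ (1-s-1)) (Set.Ioo 0 1) :=
        ((hB1.1.add hB2.1).div_const 2).sub hB3.1
      have hadd12 : IntegrableOn (fun v : ℝ => v ^ (p+(N:ℝ)-1) * (1-v) ^ (1-s-1)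
          + v ^ (p+1+(N:ℝ)-1) * (1-v) ^ (1-s-1)) (Set.Ioo 0 1) := hB1.1.add hB2.1
      have hhalf : IntegrableOn (fun v : ℝ => (v ^ (p+(N:ℝ)-1) * (1-v) ^ (1-s-1)
          + v ^ (p+1+(N:ℝ)-1) * (1-v) ^ (1-s-1))/2) (Set.Ioo 0 1) := hadd12.div_const 2
      have hint2 : ∫ v in Set.Ioo (0:ℝ) 1, f (N+1) v
          = (∫ v in Set.Ioo (0:ℝ) 1, f N v)
            + (((∫ v in Set.Ioo (0:ℝ) 1, v ^ (p+(N:ℝ)-1) * (1-v) ^ (1-s-1))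
              + ∫ v in Set.Ioo (0:ℝ) 1, v ^ (p+1+(N:ℝ)-1) * (1-v) ^ (1-s-1))/2
              - ∫ v in Set.Ioo (0:ℝ) 1, v ^ (q+(N:ℝ)-1) * (1-v) ^ (1-s-1)) := by
        rw [setIntegral_congr_fun measurableSet_Ioo hpt,
          integral_add (hfint N) hco,
          integral_sub hhalf hB3.1,
          integral_div, integral_add hB1.1 hB2.1]
      -- convert the three beta values into H-differences
      have hconv : ∀ c : ℝ, 0 < c → c ≠ s → -1 < c - s →
          Real.Gamma c * Real.Gamma (1-s) / Real.Gamma (c+(1-s))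
            = Real.Gamma (1-s)/s * (H (c+1) - H c) := by
        intro c hc hcne hcgt
        have hgs := gamma_step hs0 hs1 hc hcne hcgt
        have e : c + (1-s) = c+1-s := by ring
        rw [e]
        simp only [hH]
        rw [hgs]
        have hΓne : Real.Gamma (c+1-s) ≠ 0 :=
          (Real.Gamma_pos_of_pos (by linarith)).ne'
        field_simp
      rw [hint2, ih, hB1.2, hB2.2, hB3.2,
        hconv _ hc1pos hc1ne hc1gt, hconv _ hc2pos hc2ne hc2gt,
        hconv _ hc3pos hc3ne hc3gt]
      have c1' : p + ((N+1:ℕ):ℝ) = p + (N:ℝ) + 1 := by push_cast; ring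
      have c2' : p + 1 + ((N+1:ℕ):ℝ) = p + 1 + (N:ℝ) + 1 := by push_cast; ring
      have c3' : q + ((N+1:ℕ):ℝ) = q + (N:ℝ) + 1 := by push_cast; ring
      rw [c1', c2', c3']
      ring
  -- cancellation : H p + H (p+1) = 0
  have hGn : Real.Gamma (-(s/2)) ≠ 0 := by
    apply Real.Gamma_ne_zero
    intro m
    rcases m with _ | m
    · push_cast
      intro h
      linarith
    · push_cast
      intro h
      have hm : (0:ℝ) ≤ (m:ℝ) := Nat.cast_nonneg m
      nlinarith
  have hcancel : H p + H (p+1) = 0 := by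
    simp only [hH]
    have e1 : p - s = -(s/2) := by rw [hp_def]; ring
    have e2 : p + 1 - s = -(s/2) + 1 := by rw [hp_def]; ring
    have hns : -(s/2) ≠ 0 := by intro h; linarith
    rw [e1, e2, Real.Gamma_add_one hns, Real.Gamma_add_one hp0.ne']
    rw [hp_def]
    rw [div_add_div _ _ hGn (mul_ne_zero hns hGn), div_eq_zero_iff]
    left
    ring
  -- limit of the closed forms
  have h1 : Tendsto (fun N : ℕ => H (p+(N:ℝ)) - H (q+(N:ℝ))) atTop (𝓝 0) :=
    Hdiff_tendsto hs0 hs1 p q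
  have h2 : Tendsto (fun N : ℕ => H (p+1+(N:ℝ)) - H (q+(N:ℝ))) atTop (𝓝 0) :=
    Hdiff_tendsto hs0 hs1 (p+1) q
  have hlim : Tendsto (fun N : ℕ => ∫ v in Set.Ioo (0:ℝ) 1, f N v) atTop
      (𝓝 (Real.Gamma (1-s)/s * H q)) := by
    have hseq : Tendsto (fun N : ℕ => Real.Gamma (1-s)/s *
        (((H (p+(N:ℝ)) - H (q+(N:ℝ))) + (H (p+1+(N:ℝ)) - H (q+(N:ℝ))))/2 + H q))
        atTop (𝓝 (Real.Gamma (1-s)/s * (((0:ℝ)+0)/2 + H q))) :=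
      Tendsto.const_mul _ (Tendsto.add_const _ (Tendsto.div_const (h1.add h2) 2))
    have e0 : ((0:ℝ)+0)/2 + H q = H q := by ring
    rw [e0] at hseq
    refine hseq.congr fun N => ?_
    rw [key N, hcancel]
    ring
  -- a.e. monotonicity and pointwise convergence
  have hmono : ∀ᵐ v ∂(volume.restrict (Set.Ioo (0:ℝ) 1)), Monotone fun N => f N v := by
    refine (ae_restrict_iff' measurableSet_Ioo).mpr (ae_of_all _ fun v hv => ?_)
    intro i j hij
    have h1' : v ^ j ≤ v ^ i := pow_le_pow_of_le_one hv.1.le hv.2.le hij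
    simp only [hf]
    have := hgnn v hv
    nlinarith
  have htd : ∀ᵐ v ∂(volume.restrict (Set.Ioo (0:ℝ) 1)),
      Tendsto (fun N => f N v) atTop (𝓝 (g v)) := by
    refine (ae_restrict_iff' measurableSet_Ioo).mpr (ae_of_all _ fun v hv => ?_)
    have hpow : Tendsto (fun N : ℕ => v ^ N) atTop (𝓝 0) :=
      tendsto_pow_atTop_nhds_zero_of_lt_one hv.1.le hv.2
    have ht : Tendsto (fun N : ℕ => g v * (1 - v ^ N)) atTop (𝓝 (g v * (1 - 0))) :=
      (tendsto_const_nhds.sub hpow).const_mul _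
    simpa using ht
  have hmain := integral_tendsto_of_tendsto_of_monotone hfint hgint hmono htd
  have hval : ∫ v in Set.Ioo (0:ℝ) 1, g v = Real.Gamma (1-s)/s * H q :=
    tendsto_nhds_unique hmain hlim
  refine ⟨hgint, ?_⟩
  have hfin : s * (Real.Gamma (1-s)/s * H q)
      = Real.Gamma (1-s) * Real.Gamma q / Real.Gamma (q-s) := by
    simp only [hH]
    calc s * (Real.Gamma (1-s)/s * (Real.Gamma q/Real.Gamma (q-s)))
        = (s/s) * (Real.Gamma (1-s) * (Real.Gamma q/Real.Gamma (q-s))) := by ring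
      _ = Real.Gamma (1-s) * Real.Gamma q / Real.Gamma (q-s) := by
          rw [div_self hs0.ne', one_mul, mul_div_assoc]
  calc s * ∫ v in Set.Ioo (0:ℝ) 1, g v = s * (Real.Gamma (1-s)/s * H q) := by rw [hval]
    _ = _ := hfin

/-- Subordination identity from the proof of Theorem 3.2:
`s ∫_0^∞ (cosh t - e^{-μt}) (sinh t)^{-s-1} dt
  = 2^s Γ(1-s) Γ(μ/2 + (1+s)/2) / Γ(μ/2 + (1-s)/2)`,
the integral being absolutely convergent. -/
theorem cosh_subordination_identity (s μ : ℝ) (hs0 : 0 < s) (hs1 : s < 1) (hμ : 0 ≤ μ) :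
    IntegrableOn
      (fun t : ℝ => (Real.cosh t - Real.exp (-μ * t)) * (Real.sinh t) ^ (-s - 1))
      (Set.Ioi (0 : ℝ)) ∧
    s * ∫ t in Set.Ioi (0 : ℝ),
        (Real.cosh t - Real.exp (-μ * t)) * (Real.sinh t) ^ (-s - 1) =
      2 ^ s * Real.Gamma (1 - s) *
        Real.Gamma (μ / 2 + (1 + s) / 2) / Real.Gamma (μ / 2 + (1 - s) / 2) := by
  have hq : s/2 + 1/2 ≤ μ/2 + (1+s)/2 := by linarith
  obtain ⟨hGint0, hGval0⟩ := core_lemma hs0 hs1 hq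
  rw [show μ/2+(1+s)/2-s = μ/2+(1-s)/2 by ring] at hGval0
  -- the function on (0,1)
  set G : ℝ → ℝ := fun v => 2^s * (((v ^ (s/2-1) + v ^ (s/2))/2 - v ^ (μ/2+(1+s)/2-1))
      * (1-v) ^ (-s-1)) with hG
  have hGint : IntegrableOn G (Set.Ioo 0 1) := hGint0.const_mul _
  -- derivative data for the change of variables v = exp (-2 t)
  have hderiv : ∀ x ∈ Set.Ioi (0:ℝ), HasDerivWithinAt (fun t : ℝ => Real.exp (-2*t))
      ((-2) * Real.exp (-2*x)) (Set.Ioi 0) x := by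
    intro x _
    have h0 : HasDerivAt (fun t : ℝ => -2*t) (-2) x := by
      simpa using (hasDerivAt_id x).const_mul (-2)
    have h : HasDerivAt (fun t : ℝ => Real.exp (-2*t)) (Real.exp (-2*x) * (-2)) x := h0.exp
    have h' : HasDerivAt (fun t : ℝ => Real.exp (-2*t)) ((-2) * Real.exp (-2*x)) x := by
      simpa [mul_comm] using h
    exact h'.hasDerivWithinAt
  have hinj : Set.InjOn (fun t : ℝ => Real.exp (-2*t)) (Set.Ioi 0) := by
    intro a _ b _ h
    have h2 : (-2)*a = (-2)*b := Real.exp_injective h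
    linarith
  have himg : (fun t : ℝ => Real.exp (-2*t)) '' (Set.Ioi 0) = Set.Ioo 0 1 := by
    ext v
    constructor
    · rintro ⟨t, ht, rfl⟩
      have ht' : (0:ℝ) < t := ht
      refine ⟨Real.exp_pos _, ?_⟩
      calc Real.exp (-2*t) < Real.exp 0 := Real.exp_lt_exp.mpr (by linarith)
        _ = 1 := Real.exp_zero
    · rintro ⟨hv0, hv1⟩
      refine ⟨-(Real.log v)/2, ?_, ?_⟩
      · have : Real.log v < 0 := Real.log_neg hv0 hv1
        simp only [Set.mem_Ioi]
        linarith
      · simp only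
        rw [show -2 * (-(Real.log v)/2) = Real.log v by ring, Real.exp_log hv0]
  -- pointwise identity
  have hpt : ∀ t ∈ Set.Ioi (0:ℝ),
      |(-2) * Real.exp (-2*t)| • G (Real.exp (-2*t))
        = (Real.cosh t - Real.exp (-μ * t)) * Real.sinh t ^ (-s - 1) := by
    intro t ht
    have hexp : ∀ a b : ℝ, Real.exp a ^ b = Real.exp (a * b) :=
      fun a b => (Real.exp_mul a b).symm
    have hv1 : Real.exp (-2*t) < 1 := by
      have ht' : (0:ℝ) < t := ht
      calc Real.exp (-2*t) < Real.exp 0 := Real.exp_lt_exp.mpr (by linarith)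
        _ = 1 := Real.exp_zero
    have h1v : (0:ℝ) < 1 - Real.exp (-2*t) := by linarith
    have habs : |(-2) * Real.exp (-2*t)| = 2 * Real.exp (-2*t) := by
      rw [abs_mul, abs_of_pos (Real.exp_pos _)]
      norm_num
    have hsinh : Real.sinh t = (1 - Real.exp (-2*t)) * (Real.exp t / 2) := by
      rw [Real.sinh_eq]
      have hee : Real.exp (-2*t) * Real.exp t = Real.exp (-t) := by
        rw [← Real.exp_add]; ring_nf
      rw [← hee]; ring
    have hs1' : Real.sinh t ^ (-s-1)
        = (1 - Real.exp (-2*t)) ^ (-s-1) * (Real.exp t / 2) ^ (-s-1) := by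
      rw [hsinh, Real.mul_rpow h1v.le (by positivity)]
    have hs2 : (Real.exp t / 2) ^ (-s-1) = Real.exp (t * -(s+1)) * 2 ^ (s+1) := by
      rw [Real.div_rpow (Real.exp_pos t).le (by norm_num : (0:ℝ) ≤ 2), hexp,
        show (-s-1:ℝ) = -(s+1) by ring, Real.rpow_neg (by norm_num : (0:ℝ) ≤ 2),
        div_eq_mul_inv, inv_inv]
    have h2s : (2:ℝ) ^ (s+1) = 2^s * 2 := by
      rw [Real.rpow_add (by norm_num : (0:ℝ) < 2), Real.rpow_one]
    have m1 : Real.exp t * Real.exp (t * -(s+1))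
        = Real.exp (-2*t) ^ (s/2-1) * Real.exp (-2*t) := by
      rw [hexp, ← Real.exp_add, ← Real.exp_add]; ring_nf
    have m2 : Real.exp (-t) * Real.exp (t * -(s+1))
        = Real.exp (-2*t) ^ (s/2) * Real.exp (-2*t) := by
      rw [hexp, ← Real.exp_add, ← Real.exp_add]; ring_nf
    have m3 : Real.exp (-μ*t) * Real.exp (t * -(s+1))
        = Real.exp (-2*t) ^ (μ/2+(1+s)/2-1) * Real.exp (-2*t) := by
      rw [hexp, ← Real.exp_add, ← Real.exp_add]; ring_nf
    rw [smul_eq_mul, habs, hG, Real.cosh_eq, hs1', hs2, h2s]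
    linear_combination (-(1 - Real.exp (-2*t)) ^ (-s-1) * 2 ^ s) * m1
      + (-(1 - Real.exp (-2*t)) ^ (-s-1) * 2 ^ s) * m2
      + (2 * (1 - Real.exp (-2*t)) ^ (-s-1) * 2 ^ s) * m3
  -- transfer integrability
  have hiff := integrableOn_image_iff_integrableOn_abs_deriv_smul measurableSet_Ioi hderiv hinj G
  rw [himg] at hiff
  have hint1 : IntegrableOn
      (fun x : ℝ => |(-2) * Real.exp (-2*x)| • G (Real.exp (-2*x))) (Set.Ioi 0) :=
    hiff.mp hGint
  have hIeq := integral_image_eq_integral_abs_deriv_smul measurableSet_Ioi hderiv hinj G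
  rw [himg] at hIeq
  constructor
  · exact hint1.congr_fun hpt measurableSet_Ioi
  · have e1 : ∫ t in Set.Ioi (0:ℝ),
        (Real.cosh t - Real.exp (-μ * t)) * Real.sinh t ^ (-s - 1)
        = ∫ v in Set.Ioo (0:ℝ) 1, G v := by
      rw [hIeq]
      exact (setIntegral_congr_fun measurableSet_Ioi hpt).symm
    rw [e1, hG]
    rw [MeasureTheory.integral_const_mul]
    calc s * (2^s * ∫ v in Set.Ioo (0:ℝ) 1,
          ((v ^ (s/2-1) + v ^ (s/2))/2 - v ^ (μ/2+(1+s)/2-1)) * (1-v) ^ (-s-1))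
        = 2^s * (s * ∫ v in Set.Ioo (0:ℝ) 1,
          ((v ^ (s/2-1) + v ^ (s/2))/2 - v ^ (μ/2+(1+s)/2-1)) * (1-v) ^ (-s-1)) := by ring
      _ = 2^s * (Real.Gamma (1-s) * Real.Gamma (μ/2+(1+s)/2)
            / Real.Gamma (μ/2+(1-s)/2)) := by rw [hGval0]
      _ = _ := by ring
end

section
/- Let 0 < s < 1. Then ∫_0^∞ (cosh t - 1) · (sinh t)^{-s-1} dt = ∫_0^∞ (1 - (t / sinh t)^{s+1}) · t^{-s-1} dt; equivalently, lim_{δ → 0⁺} ∫_δ^∞ ( (cosh t) (sinh t)^{-s-1} - t^{-s-1} ) dt = 0. -/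
open MeasureTheory Real Filter Set Topology

-- elementary bounds
lemma my_sinh_le_mul_cosh {x : ℝ} (hx : 0 ≤ x) : Real.sinh x ≤ x * Real.cosh x := by
  have hd : ∀ y : ℝ, HasDerivAt (fun t => t * Real.cosh t - Real.sinh t) (y * Real.sinh y) y := by
    intro y
    have := ((hasDerivAt_id y).mul (Real.hasDerivAt_cosh y)).sub (Real.hasDerivAt_sinh y)
    exact this.congr_deriv (by simp [id])
  have mono : MonotoneOn (fun t => t * Real.cosh t - Real.sinh t) (Ici 0) := by
    apply monotoneOn_of_deriv_nonneg (convex_Ici 0)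
    · exact fun y _ => ((hd y).continuousAt).continuousWithinAt
    · exact fun y _ => ((hd y).differentiableAt).differentiableWithinAt
    · intro y hy
      rw [interior_Ici, mem_Ioi] at hy
      rw [(hd y).deriv]
      have := Real.sinh_nonneg_iff.2 hy.le
      positivity
  have h0 := mono (self_mem_Ici) hx hx
  simp at h0
  linarith

lemma my_cosh_sub_one_le {x : ℝ} (hx : 0 ≤ x) : Real.cosh x - 1 ≤ x * Real.sinh x := by
  have hd : ∀ y : ℝ, HasDerivAt (fun t => t * Real.sinh t - Real.cosh t) (y * Real.cosh y) y := by
    intro y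
    have := ((hasDerivAt_id y).mul (Real.hasDerivAt_sinh y)).sub (Real.hasDerivAt_cosh y)
    exact this.congr_deriv (by simp [id])
  have mono : MonotoneOn (fun t => t * Real.sinh t - Real.cosh t) (Ici 0) := by
    apply monotoneOn_of_deriv_nonneg (convex_Ici 0)
    · exact fun y _ => ((hd y).continuousAt).continuousWithinAt
    · exact fun y _ => ((hd y).differentiableAt).differentiableWithinAt
    · intro y hy
      rw [interior_Ici, mem_Ioi] at hy
      rw [(hd y).deriv]
      have := (Real.cosh_pos (x := y)).le
      positivity
  have h0 := mono (self_mem_Ici) hx hx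
  simp at h0
  linarith

lemma my_cosh_le_two {x : ℝ} (hx0 : 0 ≤ x) (hx1 : x ≤ 1) : Real.cosh x ≤ 2 := by
  have h1 : Real.cosh x ≤ Real.cosh 1 := by
    rw [Real.cosh_le_cosh]
    rw [abs_of_nonneg hx0, abs_one]; exact hx1
  have h2 : Real.cosh 1 ≤ 2 := by
    rw [Real.cosh_eq]
    have := Real.exp_one_lt_d9
    have h3 : Real.exp (-1) ≤ 1 := by
      rw [Real.exp_le_one_iff]; norm_num
    nlinarith
  linarith

lemma my_sinh_le {x : ℝ} (hx0 : 0 ≤ x) (hx1 : x ≤ 1) : Real.sinh x ≤ 2 * x := by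
  have := my_sinh_le_mul_cosh hx0
  have := my_cosh_le_two hx0 hx1
  nlinarith

lemma my_cosh_quad {x : ℝ} (hx0 : 0 ≤ x) (hx1 : x ≤ 1) : Real.cosh x - 1 ≤ 2 * x ^ 2 := by
  have h1 := my_cosh_sub_one_le hx0
  have h2 := my_sinh_le hx0 hx1
  nlinarith

lemma my_sinh_cub {x : ℝ} (hx0 : 0 ≤ x) (hx1 : x ≤ 1) : Real.sinh x - x ≤ 2 * x ^ 3 := by
  have h1 := my_sinh_le_mul_cosh hx0
  have h2 := my_cosh_quad hx0 hx1
  nlinarith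

section
variable {s : ℝ}

-- the antiderivative and its derivative
lemma my_hasDerivAt (hs0 : 0 < s) {t : ℝ} (ht : 0 < t) :
    HasDerivAt (fun t : ℝ => s⁻¹ * (t ^ (-s) - Real.sinh t ^ (-s)))
      (Real.cosh t * Real.sinh t ^ (-s - 1) - t ^ (-s - 1)) t := by
  have hS : 0 < Real.sinh t := Real.sinh_pos_iff.2 ht
  have h1 : HasDerivAt (fun t : ℝ => t ^ (-s)) (-s * t ^ (-s - 1)) t := by
    have := Real.hasDerivAt_rpow_const (x := t) (p := -s) (Or.inl ht.ne')
    convert this using 2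
  have h2 : HasDerivAt (fun t : ℝ => Real.sinh t ^ (-s))
      (Real.cosh t * (-s) * Real.sinh t ^ (-s - 1)) t := by
    have := (Real.hasDerivAt_sinh t).rpow_const (p := -s) (Or.inl hS.ne')
    convert this using 2
  have h3 := (h1.sub h2).const_mul s⁻¹
  refine h3.congr_deriv ?_
  field_simp
  ring

lemma my_int_cosh (hs0 : 0 < s) {δ : ℝ} (hδ : 0 < δ) :
    IntegrableOn (fun t : ℝ => Real.cosh t * Real.sinh t ^ (-s - 1)) (Ioi δ) := by
  have hsinh_top : Tendsto Real.sinh atTop atTop := by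
    apply tendsto_atTop_mono' atTop _ tendsto_id
    filter_upwards [eventually_ge_atTop (0 : ℝ)] with x hx
    simpa using Real.self_le_sinh_iff.2 hx
  apply integrableOn_Ioi_deriv_of_nonneg'
    (g := fun t : ℝ => -s⁻¹ * Real.sinh t ^ (-s)) (l := -s⁻¹ * 0)
  · intro x hx
    have hx0 : 0 < x := lt_of_lt_of_le hδ hx
    have hS : 0 < Real.sinh x := Real.sinh_pos_iff.2 hx0
    have := ((Real.hasDerivAt_sinh x).rpow_const (p := -s) (Or.inl hS.ne')).const_mul (-s⁻¹)
    refine this.congr_deriv ?_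
    field_simp
  · intro x hx
    have hx0 : 0 < x := hδ.trans hx
    have hS : 0 < Real.sinh x := Real.sinh_pos_iff.2 hx0
    have := Real.cosh_pos (x := x)
    positivity
  · exact (((tendsto_rpow_neg_atTop hs0).comp hsinh_top).const_mul _)

lemma my_int_rpow (hs0 : 0 < s) {δ : ℝ} (hδ : 0 < δ) :
    IntegrableOn (fun t : ℝ => t ^ (-s - 1)) (Ioi δ) :=
  integrableOn_Ioi_rpow_of_lt (by linarith) hδ

lemma my_L1 (hs0 : 0 < s) {δ : ℝ} (hδ : 0 < δ) :
    (∫ t in Ioi δ, (Real.cosh t * Real.sinh t ^ (-s - 1) - t ^ (-s - 1))) =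
      s⁻¹ * (Real.sinh δ ^ (-s) - δ ^ (-s)) := by
  have hsinh_top : Tendsto Real.sinh atTop atTop := by
    apply tendsto_atTop_mono' atTop _ tendsto_id
    filter_upwards [eventually_ge_atTop (0 : ℝ)] with x hx
    simpa using Real.self_le_sinh_iff.2 hx
  have key := integral_Ioi_of_hasDerivAt_of_tendsto
    (f := fun t : ℝ => s⁻¹ * (t ^ (-s) - Real.sinh t ^ (-s)))
    (f' := fun t : ℝ => Real.cosh t * Real.sinh t ^ (-s - 1) - t ^ (-s - 1))
    (a := δ) (m := 0)
    ((my_hasDerivAt hs0 hδ).continuousAt.continuousWithinAt)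
    (fun x hx => my_hasDerivAt hs0 (hδ.trans hx))
    ((my_int_cosh hs0 hδ).sub (my_int_rpow hs0 hδ))
    (by
      have h1 : Tendsto (fun t : ℝ => t ^ (-s) - Real.sinh t ^ (-s)) atTop (𝓝 (0 - 0)) :=
        (tendsto_rpow_neg_atTop hs0).sub ((tendsto_rpow_neg_atTop hs0).comp hsinh_top)
      simpa using h1.const_mul s⁻¹)
  rw [key]
  ring
end

section
variable {s : ℝ}

lemma my_L2 (hs0 : 0 < s) (hs1 : s < 1) :
    Tendsto (fun δ : ℝ => s⁻¹ * (Real.sinh δ ^ (-s) - δ ^ (-s))) (𝓝[>] (0:ℝ)) (𝓝 0) := by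
  apply squeeze_zero_norm' (a := fun δ : ℝ => s⁻¹ * (2 * δ))
  · filter_upwards [Ioc_mem_nhdsGT (zero_lt_one' ℝ)] with δ hδ
    obtain ⟨hδ0, hδ1⟩ := hδ
    have hS : 0 < Real.sinh δ := Real.sinh_pos_iff.2 hδ0
    have hδS : δ ≤ Real.sinh δ := by simpa using Real.self_le_sinh_iff.2 hδ0.le
    have hle : Real.sinh δ ^ (-s) ≤ δ ^ (-s) :=
      Real.rpow_le_rpow_of_nonpos hδ0 hδS (by linarith)
    have hrp : (0:ℝ) < δ ^ (-s) := Real.rpow_pos_of_pos hδ0 _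
    have hx0 : 0 < δ / Real.sinh δ := by positivity
    have hx1 : δ / Real.sinh δ ≤ 1 := by rw [div_le_one hS]; exact hδS
    have h1 : δ / Real.sinh δ ≤ (δ / Real.sinh δ) ^ s := by
      have := Real.rpow_le_rpow_of_exponent_ge hx0 hx1 hs1.le
      rwa [Real.rpow_one] at this
    have h2 : Real.sinh δ ^ (-s) = δ ^ (-s) * (δ / Real.sinh δ) ^ s := by
      rw [Real.div_rpow hδ0.le hS.le, Real.rpow_neg hδ0.le, Real.rpow_neg hS.le]
      field_simp
    have h5 : (1 - 2 * δ ^ 2) * Real.sinh δ ≤ δ := by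
      nlinarith [my_sinh_cub hδ0.le hδ1]
    have h4 : 1 - δ / Real.sinh δ ≤ 2 * δ ^ 2 := by
      rw [show 1 - δ / Real.sinh δ = (Real.sinh δ - δ) / Real.sinh δ by field_simp,
        div_le_iff₀ hS]
      nlinarith [my_sinh_cub hδ0.le hδ1]
    have hmain : δ ^ (-s) - Real.sinh δ ^ (-s) ≤ 2 * δ := by
      calc δ ^ (-s) - Real.sinh δ ^ (-s) = δ ^ (-s) * (1 - (δ / Real.sinh δ) ^ s) := by
            rw [h2]; ring
        _ ≤ δ ^ (-s) * (1 - δ / Real.sinh δ) := by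
            apply mul_le_mul_of_nonneg_left (by linarith) hrp.le
        _ ≤ δ ^ (-s) * (2 * δ ^ 2) := mul_le_mul_of_nonneg_left h4 hrp.le
        _ = 2 * δ ^ ((2:ℝ) - s) := by
            rw [show δ ^ (2:ℕ) = δ ^ ((2:ℕ):ℝ) by rw [Real.rpow_natCast],
              show ((2:ℕ):ℝ) = (2:ℝ) by norm_num, ← mul_assoc, mul_comm (δ ^ (-s)),
              mul_assoc, ← Real.rpow_add hδ0]
            ring_nf
        _ ≤ 2 * δ ^ (1:ℝ) := by
            have := Real.rpow_le_rpow_of_exponent_ge hδ0 hδ1 (by linarith : (1:ℝ) ≤ 2 - s)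
            linarith
        _ = 2 * δ := by rw [Real.rpow_one]
    rw [norm_mul, norm_eq_abs, norm_eq_abs, abs_of_pos (by positivity : (0:ℝ) < s⁻¹),
      abs_of_nonpos (by linarith), neg_sub]
    exact mul_le_mul_of_nonneg_left hmain (inv_nonneg.2 hs0.le)
  · have h : Tendsto (fun δ : ℝ => s⁻¹ * (2 * δ)) (𝓝 (0:ℝ)) (𝓝 (s⁻¹ * (2 * 0))) :=
      ((continuous_const.mul (continuous_const.mul continuous_id)).tendsto 0)
    simpa using h.mono_left nhdsWithin_le_nhds

lemma my_key {t : ℝ} (ht : 0 < t) :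
    (1 - (t / Real.sinh t) ^ (s + 1)) * t ^ (-s - 1)
      = t ^ (-s - 1) - Real.sinh t ^ (-s - 1) := by
  have hS : 0 < Real.sinh t := Real.sinh_pos_iff.2 ht
  have e : (-s - 1) = -(s+1) := by ring
  rw [e, Real.div_rpow ht.le hS.le, Real.rpow_neg ht.le, Real.rpow_neg hS.le]
  have h1 : t ^ (s+1) ≠ 0 := (Real.rpow_pos_of_pos ht _).ne'
  have h2 : Real.sinh t ^ (s+1) ≠ 0 := (Real.rpow_pos_of_pos hS _).ne'
  field_simp
end

section
variable {s : ℝ}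

lemma my_rpow_combine {t : ℝ} (ht : 0 < t) (c : ℝ) :
    c * t ^ (2:ℕ) * t ^ (-s - 1) = c * t ^ (1 - s) := by
  rw [show t ^ (2:ℕ) = t ^ ((2:ℕ):ℝ) by rw [Real.rpow_natCast],
    show ((2:ℕ):ℝ) = (2:ℝ) by norm_num, mul_assoc, ← Real.rpow_add ht,
    show (2:ℝ) + (-s - 1) = 1 - s by ring]

lemma my_L3 (hs0 : 0 < s) (hs1 : s < 1) :
    IntegrableOn (fun t : ℝ => (Real.cosh t - 1) * Real.sinh t ^ (-s - 1)) (Ioi (0:ℝ)) := by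
  have hcont : ContinuousOn (fun t : ℝ => (Real.cosh t - 1) * Real.sinh t ^ (-s - 1)) (Ioi 0) := by
    apply ContinuousOn.mul ((Real.continuous_cosh.sub continuous_const).continuousOn)
    apply ContinuousOn.rpow_const Real.continuous_sinh.continuousOn
    exact fun x hx => Or.inl (Real.sinh_pos_iff.2 hx).ne'
  rw [← Ioc_union_Ioi_eq_Ioi (zero_le_one' ℝ)]
  apply IntegrableOn.union
  · have hg : IntegrableOn (fun t : ℝ => 2 * t ^ (1 - s)) (Ioc (0:ℝ) 1) := by
      have h := intervalIntegral.intervalIntegrable_rpow'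
        (a := (0:ℝ)) (b := 1) (r := 1 - s) (by linarith)
      rw [intervalIntegrable_iff_integrableOn_Ioc_of_le zero_le_one] at h
      exact h.const_mul 2
    apply Integrable.mono' hg
      ((hcont.mono Ioc_subset_Ioi_self).aestronglyMeasurable measurableSet_Ioc)
    rw [ae_restrict_iff' measurableSet_Ioc]
    filter_upwards with t ht
    obtain ⟨ht0, ht1⟩ := ht
    have hS : 0 < Real.sinh t := Real.sinh_pos_iff.2 ht0
    have hc1 : (0:ℝ) ≤ Real.cosh t - 1 := by have := Real.one_le_cosh t; linarith
    have hrp : (0:ℝ) < Real.sinh t ^ (-s-1) := Real.rpow_pos_of_pos hS _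
    rw [norm_eq_abs, abs_of_nonneg (by positivity)]
    have hb1 : Real.cosh t - 1 ≤ 2 * t ^ 2 := my_cosh_quad ht0.le ht1
    have htS : t ≤ Real.sinh t := by simpa using Real.self_le_sinh_iff.2 ht0.le
    have hb2 : Real.sinh t ^ (-s-1) ≤ t ^ (-s-1) :=
      Real.rpow_le_rpow_of_nonpos ht0 htS (by linarith)
    calc (Real.cosh t - 1) * Real.sinh t ^ (-s-1)
        ≤ (2 * t ^ 2) * t ^ (-s-1) :=
          mul_le_mul hb1 hb2 hrp.le (by positivity)
      _ = 2 * t ^ (1 - s) := my_rpow_combine ht0 2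
  · apply Integrable.mono' (my_int_cosh hs0 one_pos)
      ((hcont.mono (Ioi_subset_Ioi zero_le_one)).aestronglyMeasurable measurableSet_Ioi)
    rw [ae_restrict_iff' measurableSet_Ioi]
    filter_upwards with t ht
    have ht0 : (0:ℝ) < t := lt_trans one_pos ht
    have hS : 0 < Real.sinh t := Real.sinh_pos_iff.2 ht0
    have hrp : (0:ℝ) < Real.sinh t ^ (-s-1) := Real.rpow_pos_of_pos hS _
    have hc1 : (0:ℝ) ≤ Real.cosh t - 1 := by have := Real.one_le_cosh t; linarith
    rw [norm_eq_abs, abs_of_nonneg (by positivity)]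
    have hcc : Real.cosh t - 1 ≤ Real.cosh t := by linarith
    exact mul_le_mul_of_nonneg_right hcc hrp.le

lemma my_L4 (hs0 : 0 < s) (hs1 : s < 1) :
    IntegrableOn (fun t : ℝ => t ^ (-s - 1) - Real.sinh t ^ (-s - 1)) (Ioi (0:ℝ)) := by
  have hcont : ContinuousOn (fun t : ℝ => t ^ (-s-1) - Real.sinh t ^ (-s-1)) (Ioi 0) := by
    apply ContinuousOn.sub
    · exact ContinuousOn.rpow_const continuousOn_id (fun x hx => Or.inl (ne_of_gt hx))
    · exact ContinuousOn.rpow_const Real.continuous_sinh.continuousOn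
        (fun x hx => Or.inl (Real.sinh_pos_iff.2 hx).ne')
  rw [← Ioc_union_Ioi_eq_Ioi (zero_le_one' ℝ)]
  apply IntegrableOn.union
  · have hg : IntegrableOn (fun t : ℝ => (2 * (s+1)) * t ^ (1 - s)) (Ioc (0:ℝ) 1) := by
      have h := intervalIntegral.intervalIntegrable_rpow'
        (a := (0:ℝ)) (b := 1) (r := 1 - s) (by linarith)
      rw [intervalIntegrable_iff_integrableOn_Ioc_of_le zero_le_one] at h
      exact h.const_mul _
    apply Integrable.mono' hg
      ((hcont.mono Ioc_subset_Ioi_self).aestronglyMeasurable measurableSet_Ioc)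
    rw [ae_restrict_iff' measurableSet_Ioc]
    filter_upwards with t ht
    obtain ⟨ht0, ht1⟩ := ht
    have hS : 0 < Real.sinh t := Real.sinh_pos_iff.2 ht0
    have htS : t ≤ Real.sinh t := by simpa using Real.self_le_sinh_iff.2 ht0.le
    have hb2 : Real.sinh t ^ (-s-1) ≤ t ^ (-s-1) :=
      Real.rpow_le_rpow_of_nonpos ht0 htS (by linarith)
    have hrp : (0:ℝ) < t ^ (-s-1) := Real.rpow_pos_of_pos ht0 _
    rw [norm_eq_abs, abs_of_nonneg (by linarith)]
    have hx0 : 0 < t / Real.sinh t := by positivity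
    have hx1 : t / Real.sinh t ≤ 1 := by rw [div_le_one hS]; exact htS
    have hbern : 1 + (s+1) * (t / Real.sinh t - 1) ≤ (t / Real.sinh t) ^ (s+1) := by
      have h := one_add_mul_self_le_rpow_one_add
        (s := t / Real.sinh t - 1) (by linarith) (p := s+1) (by linarith)
      have h' : (1 : ℝ) + (t / Real.sinh t - 1) = t / Real.sinh t := by ring
      rwa [h'] at h
    have h4 : 1 - t / Real.sinh t ≤ 2 * t ^ 2 := by
      rw [show 1 - t / Real.sinh t = (Real.sinh t - t) / Real.sinh t by field_simp,
        div_le_iff₀ hS]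
      nlinarith [my_sinh_cub ht0.le ht1]
    calc t ^ (-s-1) - Real.sinh t ^ (-s-1)
        = (1 - (t / Real.sinh t) ^ (s + 1)) * t ^ (-s - 1) := (my_key ht0).symm
      _ ≤ ((s+1) * (1 - t / Real.sinh t)) * t ^ (-s-1) := by
          apply mul_le_mul_of_nonneg_right _ hrp.le
          nlinarith
      _ ≤ ((s+1) * (2 * t ^ 2)) * t ^ (-s-1) := by
          apply mul_le_mul_of_nonneg_right _ hrp.le
          apply mul_le_mul_of_nonneg_left h4 (by linarith)
      _ = (2 * (s+1)) * t ^ (1 - s) := by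
          rw [show ((s+1) * (2 * t ^ 2)) = (2 * (s+1)) * t ^ (2:ℕ) by ring]
          exact my_rpow_combine ht0 _
  · apply Integrable.mono' (my_int_rpow hs0 one_pos)
      ((hcont.mono (Ioi_subset_Ioi zero_le_one)).aestronglyMeasurable measurableSet_Ioi)
    rw [ae_restrict_iff' measurableSet_Ioi]
    filter_upwards with t ht
    have ht0 : (0:ℝ) < t := lt_trans one_pos ht
    have hS : 0 < Real.sinh t := Real.sinh_pos_iff.2 ht0
    have htS : t ≤ Real.sinh t := by simpa using Real.self_le_sinh_iff.2 ht0.le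
    have hb2 : Real.sinh t ^ (-s-1) ≤ t ^ (-s-1) :=
      Real.rpow_le_rpow_of_nonpos ht0 htS (by linarith)
    have hrp : (0:ℝ) < Real.sinh t ^ (-s-1) := Real.rpow_pos_of_pos hS _
    rw [norm_eq_abs, abs_of_nonneg (by linarith)]
    linarith
end


/-- The identity `c₁ = c₂` from the proof of Theorem 3.2:
`∫_0^∞ (cosh t - 1)(sinh t)^{-s-1} dt = ∫_0^∞ (1 - (t/sinh t)^{s+1}) t^{-s-1} dt`,
both integrals being absolutely convergent; equivalently,
`lim_{δ → 0⁺} ∫_δ^∞ ((cosh t)(sinh t)^{-s-1} - t^{-s-1}) dt = 0`. -/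
theorem c1_eq_c2 (s : ℝ) (hs0 : 0 < s) (hs1 : s < 1) :
    IntegrableOn (fun t : ℝ => (Real.cosh t - 1) * (Real.sinh t) ^ (-s - 1))
      (Set.Ioi (0 : ℝ)) ∧
    IntegrableOn (fun t : ℝ => (1 - (t / Real.sinh t) ^ (s + 1)) * t ^ (-s - 1))
      (Set.Ioi (0 : ℝ)) ∧
    (∫ t in Set.Ioi (0 : ℝ), (Real.cosh t - 1) * (Real.sinh t) ^ (-s - 1)) =
      (∫ t in Set.Ioi (0 : ℝ), (1 - (t / Real.sinh t) ^ (s + 1)) * t ^ (-s - 1)) ∧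
    Tendsto
      (fun δ : ℝ => ∫ t in Set.Ioi δ,
        (Real.cosh t * (Real.sinh t) ^ (-s - 1) - t ^ (-s - 1)))
      (nhdsWithin 0 (Set.Ioi (0 : ℝ))) (nhds 0) := by
  have hkey : EqOn (fun t : ℝ => (1 - (t / Real.sinh t) ^ (s + 1)) * t ^ (-s - 1))
      (fun t : ℝ => t ^ (-s - 1) - Real.sinh t ^ (-s - 1)) (Ioi 0) :=
    fun t ht => my_key ht
  have hL3 := my_L3 hs0 hs1
  have hL4 := my_L4 hs0 hs1
  have hInt2 : IntegrableOn
      (fun t : ℝ => (1 - (t / Real.sinh t) ^ (s + 1)) * t ^ (-s - 1)) (Ioi 0) :=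
    hL4.congr_fun (fun t ht => (my_key ht).symm) measurableSet_Ioi
  have hEqg : EqOn
      (fun t : ℝ => ((Real.cosh t - 1) * Real.sinh t ^ (-s-1)) -
        (t ^ (-s-1) - Real.sinh t ^ (-s-1)))
      (fun t : ℝ => Real.cosh t * Real.sinh t ^ (-s-1) - t ^ (-s-1)) (Ioi 0) :=
    fun t _ => by ring
  have hg_int : IntegrableOn
      (fun t : ℝ => Real.cosh t * Real.sinh t ^ (-s - 1) - t ^ (-s - 1)) (Ioi 0) :=
    IntegrableOn.congr_fun (hL3.sub hL4) hEqg measurableSet_Ioi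
  have hzero :
      (∫ t in Ioi (0:ℝ), (Real.cosh t * Real.sinh t ^ (-s-1) - t ^ (-s-1))) = 0 := by
    have hsub : (⋃ n : ℕ, Ioi (((n:ℝ)+1)⁻¹)) = Ioi (0:ℝ) := by
      ext x
      simp only [mem_iUnion, mem_Ioi]
      constructor
      · rintro ⟨n, hn⟩; exact lt_trans (by positivity) hn
      · intro hx
        obtain ⟨n, hn⟩ := exists_nat_one_div_lt hx
        exact ⟨n, by rwa [one_div] at hn⟩
    have hmono : Monotone (fun n : ℕ => Ioi (((n:ℝ)+1)⁻¹)) := by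
      intro m n hmn
      apply Ioi_subset_Ioi
      have hcast : (m:ℝ) ≤ n := Nat.cast_le.2 hmn
      apply inv_anti₀ (by positivity)
      linarith
    have h1 : Tendsto
        (fun n : ℕ => ∫ t in Ioi (((n:ℝ)+1)⁻¹),
          (Real.cosh t * Real.sinh t ^ (-s-1) - t ^ (-s-1))) atTop
        (𝓝 (∫ t in Ioi (0:ℝ), (Real.cosh t * Real.sinh t ^ (-s-1) - t ^ (-s-1)))) := by
      have := tendsto_setIntegral_of_monotone (fun n : ℕ => measurableSet_Ioi) hmono
        (f := fun t : ℝ => Real.cosh t * Real.sinh t ^ (-s-1) - t ^ (-s-1))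
        (μ := volume) (hsub.symm ▸ hg_int)
      rwa [hsub] at this
    have h2 : Tendsto
        (fun n : ℕ => ∫ t in Ioi (((n:ℝ)+1)⁻¹),
          (Real.cosh t * Real.sinh t ^ (-s-1) - t ^ (-s-1))) atTop (𝓝 0) := by
      have hF : (fun n : ℕ => ∫ t in Ioi (((n:ℝ)+1)⁻¹),
          (Real.cosh t * Real.sinh t ^ (-s-1) - t ^ (-s-1)))
          = fun n : ℕ => s⁻¹ * (Real.sinh (((n:ℝ)+1)⁻¹) ^ (-s) - (((n:ℝ)+1)⁻¹) ^ (-s)) := by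
        funext n
        exact my_L1 hs0 (by positivity)
      rw [hF]
      have hseq : Tendsto (fun n : ℕ => (((n:ℝ)+1)⁻¹)) atTop (𝓝[>] (0:ℝ)) := by
        apply tendsto_nhdsWithin_of_tendsto_nhds_of_eventually_within
        · have : Tendsto (fun n : ℕ => 1 / ((n:ℝ) + 1)) atTop (𝓝 0) :=
              tendsto_one_div_add_atTop_nhds_zero_nat
          simpa [one_div] using this
        · filter_upwards with n
          simp only [mem_Ioi]
          positivity
      exact (my_L2 hs0 hs1).comp hseq
    exact tendsto_nhds_unique h1 h2
  refine ⟨hL3, hInt2, ?_, ?_⟩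
  · have e2 : (∫ t in Ioi (0:ℝ), (1 - (t / Real.sinh t) ^ (s + 1)) * t ^ (-s - 1))
        = ∫ t in Ioi (0:ℝ), (t ^ (-s-1) - Real.sinh t ^ (-s-1)) :=
      setIntegral_congr_fun measurableSet_Ioi hkey
    have e3 : (∫ t in Ioi (0:ℝ), (((Real.cosh t - 1) * Real.sinh t ^ (-s-1)) -
          (t ^ (-s-1) - Real.sinh t ^ (-s-1))))
        = (∫ t in Ioi (0:ℝ), ((Real.cosh t - 1) * Real.sinh t ^ (-s-1)))
          - ∫ t in Ioi (0:ℝ), (t ^ (-s-1) - Real.sinh t ^ (-s-1)) :=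
      integral_sub hL3 hL4
    have e4 : (∫ t in Ioi (0:ℝ), (((Real.cosh t - 1) * Real.sinh t ^ (-s-1)) -
          (t ^ (-s-1) - Real.sinh t ^ (-s-1)))) = 0 := by
      rw [setIntegral_congr_fun measurableSet_Ioi hEqg]
      exact hzero
    rw [e2]
    rw [e4] at e3
    linarith
  · apply Tendsto.congr' _ (my_L2 hs0 hs1)
    filter_upwards [self_mem_nhdsWithin] with δ hδ
    exact (my_L1 hs0 hδ).symm
end
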